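/- Let A be a coherent integral domain and M a finitely presented A-module. Then M is reflexive (i.e., the canonical map M → M^∨∨ is an isomorphism) if and only if there exists an exact sequence 0 → M → A^m → A^n of A-modules for some natural numbers m, n (i.e., M is finitely copresented). -/

import Mathlib

open CategoryTheory

/-- A ring is *coherent* if every finitely generated ideal is finitely presented. -/
def IsCoherentRing (A : Type) [CommRing A] : Prop :=
  ∀ I : Ideal A, I.FG → Module.FinitePresentation A I


lemma ext_scalar (A : Type) [CommRing A] [IsDomain A] :
    ∀ (m : ℕ) (M : Type) [AddCommGroup M] [Module A M]
      (f : M →ₗ[A] (Fin m → A)), Function.Injective f → ∀ (φ : M →ₗ[A] A),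
      ∃ s : A, s ≠ 0 ∧ ∃ ψ : (Fin m → A) →ₗ[A] A, ∀ x, ψ (f x) = s * φ x := by
  intro m
  induction m with
  | zero =>
      intro M _ _ f hf φ
      refine ⟨1, one_ne_zero, 0, fun x => ?_⟩
      have hx : x = 0 := hf (Subsingleton.elim _ _)
      simp [hx]
  | succ m ih =>
      intro M _ _ f hf φ
      set lam' : (Fin (m+1) → A) →ₗ[A] A := LinearMap.proj (Fin.last m) with hlam'
      set pi : (Fin (m+1) → A) →ₗ[A] (Fin m → A) := LinearMap.funLeft A A Fin.castSucc with hpi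
      set lam : M →ₗ[A] A := lam'.comp f with hlam
      have key : ∀ (v : Fin (m+1) → A), pi v = 0 → lam' v = 0 → v = 0 := by
        intro v h1 h2
        funext i
        induction i using Fin.lastCases with
        | last => exact h2
        | cast j => exact congrFun h1 j
      by_cases hz : ∀ x : M, lam x = 0
      · have hinj : Function.Injective (pi.comp f) := by
          intro x y hxy
          have h1 : pi (f x - f y) = 0 := by
            rw [map_sub, sub_eq_zero]; exact hxy
          have h2 : lam' (f x - f y) = 0 := by
            have ha := hz x; have hb := hz y
            simp only [hlam, LinearMap.comp_apply] at ha hb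
            rw [map_sub, ha, hb, sub_zero]
          have h3 := key _ h1 h2
          rw [sub_eq_zero] at h3
          exact hf h3
        obtain ⟨s, hs, ψ₀, hψ₀⟩ := ih M (pi.comp f) hinj φ
        exact ⟨s, hs, ψ₀.comp pi, fun x => hψ₀ x⟩
      · push_neg at hz
        obtain ⟨x₁, hx₁⟩ := hz
        set c : A := lam x₁ with hc
        set M₀ := LinearMap.ker lam with hM₀
        set f0 : M₀ →ₗ[A] (Fin m → A) := pi.comp (f.comp M₀.subtype) with hf0
        have hinj0 : Function.Injective f0 := by
          intro x y hxy
          have h1 : pi (f x.1 - f y.1) = 0 := by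
            simp only [hf0, LinearMap.comp_apply] at hxy
            rw [map_sub, sub_eq_zero]; exact hxy
          have h2 : lam' (f x.1 - f y.1) = 0 := by
            have ha : lam' (f x.1) = 0 := x.2
            have hb : lam' (f y.1) = 0 := y.2
            rw [map_sub, ha, hb, sub_zero]
          have h3 := key _ h1 h2
          rw [sub_eq_zero] at h3
          exact Subtype.ext (hf h3)
        obtain ⟨s₀, hs₀, ψ₀, hψ₀⟩ := ih M₀ f0 hinj0 (φ.comp M₀.subtype)
        refine ⟨s₀ * c, mul_ne_zero hs₀ hx₁, ?_⟩
        refine ⟨c • (ψ₀.comp pi) + (s₀ * φ x₁ - ψ₀ (pi (f x₁))) • lam', fun x => ?_⟩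
        have hzmem : c • x - lam x • x₁ ∈ M₀ := by
          simp only [hM₀, LinearMap.mem_ker, map_sub, map_smul, smul_eq_mul, ← hc]
          ring
        have hkey := hψ₀ ⟨_, hzmem⟩
        simp only [hf0, LinearMap.comp_apply, Submodule.coe_subtype, map_sub, map_smul,
          smul_eq_mul] at hkey
        simp only [LinearMap.add_apply, LinearMap.smul_apply, LinearMap.comp_apply,
          smul_eq_mul]
        have hlx : lam' (f x) = lam x := rfl
        rw [hlx]
        linear_combination hkey


lemma backward_dir (A : Type) [CommRing A] [IsDomain A]
    (M : Type) [AddCommGroup M] [Module A M]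
    (m n : ℕ) (f : M →ₗ[A] (Fin m → A)) (g : (Fin m → A) →ₗ[A] (Fin n → A))
    (hf : Function.Injective f) (hex : Function.Exact f g) :
    Function.Bijective (Module.Dual.eval A M) := by
  classical
  have hgf : ∀ x : M, g (f x) = 0 := fun x => hex.apply_apply_eq_zero x
  constructor
  · intro x y hxy
    apply hf
    funext i
    have := congrArg (fun ξ : Module.Dual A (Module.Dual A M) =>
      ξ ((LinearMap.proj i).comp f)) hxy
    simpa using this
  · intro ξ
    set u : Fin m → (Fin m → A) := fun i j => if i = j then 1 else 0 with hu
    set y : Fin m → A := fun i => ξ ((LinearMap.proj i).comp f) with hy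
    have hgy : g y = 0 := by
      funext j
      have h1 : g y j = ∑ i, y i * (g (u i) j) := by
        rw [LinearMap.pi_apply_eq_sum_univ g y]
        simp [hu, Finset.sum_apply, Pi.smul_apply, smul_eq_mul]
      rw [h1]
      have h2 : ∑ i, y i * (g (u i) j) =
          ξ (∑ i, (g (u i) j) • ((LinearMap.proj i).comp f)) := by
        rw [map_sum]
        simp only [map_smul, smul_eq_mul, hy]
        exact Finset.sum_congr rfl (fun i _ => mul_comm _ _)
      rw [h2]
      have h3 : (∑ i, (g (u i) j) • ((LinearMap.proj (R := A) (φ := fun _ : Fin m => A) i).comp f)) = 0 := by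
        apply LinearMap.ext
        intro x
        simp only [LinearMap.sum_apply, LinearMap.smul_apply, LinearMap.comp_apply,
          LinearMap.proj_apply, smul_eq_mul, LinearMap.zero_apply]
        have h4 : g (f x) j = ∑ i, (f x) i * (g (u i) j) := by
          rw [LinearMap.pi_apply_eq_sum_univ g (f x)]
          simp [hu, Finset.sum_apply, Pi.smul_apply, smul_eq_mul]
        rw [hgf x] at h4
        simp only [Pi.zero_apply] at h4
        calc ∑ i, g (u i) j * f x i = ∑ i, f x i * g (u i) j :=
              Finset.sum_congr rfl (fun i _ => mul_comm _ _)
          _ = 0 := h4.symm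
      rw [h3, map_zero]
      simp
    obtain ⟨x, hx⟩ := (hex y).mp hgy
    refine ⟨x, ?_⟩
    apply LinearMap.ext
    intro φ
    obtain ⟨s, hs, ψ, hψ⟩ := ext_scalar A m M f hf φ
    have h5 : ψ y = s * ξ φ := by
      have h6 : ψ y = ∑ i, y i * ψ (u i) := by
        rw [LinearMap.pi_apply_eq_sum_univ ψ y]
        simp [hu, smul_eq_mul]
      have h7 : (∑ i, ψ (u i) • ((LinearMap.proj (R := A) (φ := fun _ : Fin m => A) i).comp f)) = s • φ := by
        apply LinearMap.ext
        intro z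
        simp only [LinearMap.sum_apply, LinearMap.smul_apply, LinearMap.comp_apply,
          LinearMap.proj_apply, smul_eq_mul]
        have h8 : ψ (f z) = ∑ i, (f z) i * ψ (u i) := by
          rw [LinearMap.pi_apply_eq_sum_univ ψ (f z)]
          simp [hu, smul_eq_mul]
        rw [← hψ z, h8]
        exact Finset.sum_congr rfl (fun i _ => mul_comm _ _)
      rw [h6]
      calc ∑ i, y i * ψ (u i)
          = ξ (∑ i, ψ (u i) • ((LinearMap.proj i).comp f)) := by
            rw [map_sum]
            simp only [map_smul, smul_eq_mul, hy]
            exact Finset.sum_congr rfl (fun i _ => mul_comm _ _)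
        _ = ξ (s • φ) := by rw [h7]
        _ = s * ξ φ := by rw [map_smul, smul_eq_mul]
    have h9 : ψ y = s * φ x := by rw [← hx]; exact hψ x
    have h10 : s * φ x = s * ξ φ := by rw [← h9, h5]
    have h11 : φ x = ξ φ := mul_left_cancel₀ hs h10
    simpa [Module.Dual.eval_apply] using h11



-- transfer of finite presentation along a linear equivalence
lemma fp_of_equiv {A : Type} [CommRing A] {N N' : Type} [AddCommGroup N] [Module A N]
    [AddCommGroup N'] [Module A N'] (e : N ≃ₗ[A] N') [Module.FinitePresentation A N] :
    Module.FinitePresentation A N' := by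
  apply Module.finitePresentation_of_surjective e.toLinearMap e.surjective
  rw [LinearMap.ker_eq_bot.mpr e.injective]
  exact Submodule.fg_bot

set_option maxHeartbeats 1000000 in
set_option synthInstance.maxHeartbeats 400000 in
lemma coh_submodule (A : Type) [CommRing A] (hA : IsCoherentRing A) :
    ∀ (m : ℕ) (N : Submodule A (Fin m → A)), N.FG → Module.FinitePresentation A N := by
  intro m
  induction m with
  | zero =>
      intro N hN
      have hsub : Subsingleton N := by
        constructor
        intro x y
        apply Subtype.ext
        exact Subsingleton.elim _ _
      apply Module.finitePresentation_of_surjective (0 : A →ₗ[A] N)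
      · intro x
        exact ⟨0, (Subsingleton.elim _ _)⟩
      · rw [LinearMap.ker_zero]
        exact Module.Finite.fg_top
  | succ m ih =>
      intro N hN
      haveI : Module.Finite A N := Module.Finite.iff_fg.mpr hN
      set lam : N →ₗ[A] A := (LinearMap.proj (Fin.last m)).comp N.subtype with hlamdef
      set I : Submodule A A := LinearMap.range lam with hIdef
      have hI : I.FG := by
        rw [hIdef, ← Submodule.map_top]
        exact Submodule.FG.map lam Module.Finite.fg_top
      haveI : Module.FinitePresentation A I := hA I hI
      have hsurj : Function.Surjective lam.rangeRestrict := LinearMap.surjective_rangeRestrict lam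
      have hker : (LinearMap.ker lam.rangeRestrict).FG :=
        Module.FinitePresentation.fg_ker lam.rangeRestrict hsurj
      set K := LinearMap.ker lam.rangeRestrict with hKdef
      set j : K →ₗ[A] (Fin m → A) :=
        (LinearMap.funLeft A A Fin.castSucc).comp (N.subtype.comp K.subtype) with hjdef
      have hjinj : Function.Injective j := by
        intro x y hxy
        apply Subtype.ext
        apply Subtype.ext
        funext i
        induction i using Fin.lastCases with
        | last =>
            have hx0 : lam.rangeRestrict x.1 = 0 := x.2
            have hy0 : lam.rangeRestrict y.1 = 0 := y.2
            have hx : lam x.1 = 0 := congrArg Subtype.val hx0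
            have hy : lam y.1 = 0 := congrArg Subtype.val hy0
            have hx' : (x.1 : Fin (m+1) → A) (Fin.last m) = 0 := hx
            have hy' : (y.1 : Fin (m+1) → A) (Fin.last m) = 0 := hy
            rw [hx', hy']
        | cast i =>
            exact congrFun hxy i
      haveI : Module.Finite A K := Module.Finite.iff_fg.mpr hker
      have hrange : (LinearMap.range j).FG := by
        rw [← Submodule.map_top]
        exact Submodule.FG.map j Module.Finite.fg_top
      haveI : Module.FinitePresentation A (LinearMap.range j) := ih _ hrange
      haveI : Module.FinitePresentation A K :=
        fp_of_equiv (A := A) (N := LinearMap.range j) (N' := K)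
          (LinearEquiv.ofInjective j hjinj).symm
      exact Module.finitePresentation_of_ker lam.rangeRestrict hsurj

-- kernels of maps between finite free modules are f.g. over a coherent ring
lemma coh_ker_fg (A : Type) [CommRing A] (hA : IsCoherentRing A) (k l : ℕ)
    (g : (Fin k → A) →ₗ[A] (Fin l → A)) : (LinearMap.ker g).FG := by
  have hr : (LinearMap.range g).FG := by
    rw [← Submodule.map_top]
    exact Submodule.FG.map g Module.Finite.fg_top
  haveI : Module.FinitePresentation A (LinearMap.range g) := coh_submodule A hA l _ hr
  have := Module.FinitePresentation.fg_ker g.rangeRestrict (LinearMap.surjective_rangeRestrict g)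
  rwa [LinearMap.ker_rangeRestrict] at this

-- factoring a functional through a surjection
lemma factor_through {A P Q : Type} [CommRing A] [AddCommGroup P] [Module A P]
    [AddCommGroup Q] [Module A Q] (q : P →ₗ[A] Q) (hq : Function.Surjective q)
    (ψ : P →ₗ[A] A) (h : LinearMap.ker q ≤ LinearMap.ker ψ) :
    ∃ ξ : Q →ₗ[A] A, ∀ x, ξ (q x) = ψ x := by
  set e := q.quotKerEquivOfSurjective hq with hedef
  refine ⟨((LinearMap.ker q).liftQ ψ h).comp e.symm.toLinearMap, fun x => ?_⟩
  have he : e (Submodule.Quotient.mk x) = q x := by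
    simp [hedef, LinearMap.quotKerEquivOfSurjective, LinearMap.quotKerEquivRange]
  have he2 : e.symm (q x) = Submodule.Quotient.mk x := by
    rw [← he, LinearEquiv.symm_apply_apply]
  simp only [LinearMap.comp_apply, LinearEquiv.coe_toLinearMap, he2]
  exact Submodule.liftQ_apply _ _ _

set_option maxHeartbeats 1000000 in
set_option synthInstance.maxHeartbeats 400000 in
lemma dual_fp (A : Type) [CommRing A] (hA : IsCoherentRing A)
    (M : Type) [AddCommGroup M] [Module A M] [Module.FinitePresentation A M] :
    Module.FinitePresentation A (Module.Dual A M) := by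
  obtain ⟨k, q, hq⟩ := Module.Finite.exists_fin' A M
  have hkerq : (LinearMap.ker q).FG := Module.FinitePresentation.fg_ker q hq
  obtain ⟨l, v, hv⟩ := Submodule.fg_iff_exists_fin_generating_family.mp hkerq
  set p : (Fin l → A) →ₗ[A] (Fin k → A) := Fintype.linearCombination A v with hpdef
  have hrangep : LinearMap.range p = LinearMap.ker q := by
    rw [hpdef, Fintype.range_linearCombination]; exact hv
  have hqp : ∀ u, q (p u) = 0 := by
    intro u
    have : p u ∈ LinearMap.ker q := by rw [← hrangep]; exact ⟨u, rfl⟩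
    exact this
  set ek := (Pi.basisFun A (Fin k)).toDualEquiv with hek
  set el := (Pi.basisFun A (Fin l)).toDualEquiv with hel
  set g2 : (Fin k → A) →ₗ[A] (Fin l → A) :=
    el.symm.toLinearMap.comp (p.dualMap.comp ek.toLinearMap) with hg2
  set iota : Module.Dual A M →ₗ[A] (Fin k → A) :=
    ek.symm.toLinearMap.comp q.dualMap with hiota
  have hiotainj : Function.Injective iota := by
    intro φ φ' h
    have h2 : q.dualMap φ = q.dualMap φ' := ek.symm.injective h
    apply LinearMap.ext; intro y
    obtain ⟨x, rfl⟩ := hq y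
    exact congrArg (fun ψ : Module.Dual A (Fin k → A) => ψ x) h2
  have hrange : LinearMap.range iota = LinearMap.ker g2 := by
    apply le_antisymm
    · rintro _ ⟨φ, rfl⟩
      rw [LinearMap.mem_ker]
      have hz : p.dualMap (q.dualMap φ) = 0 := by
        apply LinearMap.ext; intro u
        simp only [LinearMap.dualMap_apply, LinearMap.zero_apply, LinearMap.comp_apply]
        rw [hqp u, map_zero]
      simp only [hg2, hiota, LinearMap.comp_apply, LinearEquiv.coe_toLinearMap,
        LinearEquiv.apply_symm_apply, hz, map_zero]
    · intro w hw
      rw [LinearMap.mem_ker] at hw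
      have hz : p.dualMap (ek w) = 0 := by
        have := congrArg (fun z => el z) hw
        simpa only [hg2, LinearMap.comp_apply, LinearEquiv.coe_toLinearMap,
          LinearEquiv.apply_symm_apply, map_zero] using this
      have hle : LinearMap.ker q ≤ LinearMap.ker (ek w) := by
        intro x hx
        rw [← hrangep] at hx
        obtain ⟨u, rfl⟩ := hx
        have := congrArg (fun ψ : Module.Dual A (Fin l → A) => ψ u) hz
        exact this
      obtain ⟨ξ, hξ⟩ := factor_through q hq (ek w) hle
      refine ⟨ξ, ?_⟩
      have hdm : q.dualMap ξ = ek w := by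
        apply LinearMap.ext; intro u
        exact hξ u
      simp only [hiota, LinearMap.comp_apply, LinearEquiv.coe_toLinearMap, hdm,
        LinearEquiv.symm_apply_apply]
  have hkerfg : (LinearMap.ker g2).FG := coh_ker_fg A hA k l g2
  haveI : Module.FinitePresentation A (LinearMap.ker g2) := coh_submodule A hA k _ hkerfg
  haveI : Module.FinitePresentation A (LinearMap.range iota) := by
    rw [hrange]; infer_instance
  exact fp_of_equiv (A := A) (N := LinearMap.range iota)
    (LinearEquiv.ofInjective iota hiotainj).symm

set_option maxHeartbeats 1000000 in
set_option synthInstance.maxHeartbeats 400000 in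
lemma forward_dir (A : Type) [CommRing A] (hA : IsCoherentRing A)
    (M : Type) [AddCommGroup M] [Module A M] [Module.FinitePresentation A M]
    (hbij : Function.Bijective (Module.Dual.eval A M)) :
    ∃ (m n : ℕ) (f : M →ₗ[A] (Fin m → A)) (g : (Fin m → A) →ₗ[A] (Fin n → A)),
      Function.Injective f ∧ Function.Exact f g := by
  haveI := dual_fp A hA M
  obtain ⟨m, q2, hq2⟩ := Module.Finite.exists_fin' A (Module.Dual A M)
  have hker2 : (LinearMap.ker q2).FG := Module.FinitePresentation.fg_ker q2 hq2
  obtain ⟨n, v, hv⟩ := Submodule.fg_iff_exists_fin_generating_family.mp hker2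
  set p2 : (Fin n → A) →ₗ[A] (Fin m → A) := Fintype.linearCombination A v with hp2def
  have hrangep : LinearMap.range p2 = LinearMap.ker q2 := by
    rw [hp2def, Fintype.range_linearCombination]; exact hv
  have hqp : ∀ u, q2 (p2 u) = 0 := by
    intro u
    have : p2 u ∈ LinearMap.ker q2 := by rw [← hrangep]; exact ⟨u, rfl⟩
    exact this
  set ek := (Pi.basisFun A (Fin m)).toDualEquiv with hek
  set el := (Pi.basisFun A (Fin n)).toDualEquiv with hel
  set f : M →ₗ[A] (Fin m → A) :=
    ek.symm.toLinearMap.comp (q2.dualMap.comp (Module.Dual.eval A M)) with hfdef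
  set g : (Fin m → A) →ₗ[A] (Fin n → A) :=
    el.symm.toLinearMap.comp (p2.dualMap.comp ek.toLinearMap) with hgdef
  refine ⟨m, n, f, g, ?_, ?_⟩
  · intro x y h
    simp only [hfdef, LinearMap.comp_apply, LinearEquiv.coe_toLinearMap] at h
    have h2 : q2.dualMap (Module.Dual.eval A M x) = q2.dualMap (Module.Dual.eval A M y) :=
      ek.symm.injective h
    have h3 : Module.Dual.eval A M x = Module.Dual.eval A M y := by
      apply LinearMap.ext; intro φ
      obtain ⟨u, rfl⟩ := hq2 φ
      exact congrArg (fun ψ : Module.Dual A (Fin m → A) => ψ u) h2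
    exact hbij.1 h3
  · intro w
    constructor
    · intro hw
      have hz : p2.dualMap (ek w) = 0 := by
        have := congrArg (fun z => el z) hw
        simpa only [hgdef, LinearMap.comp_apply, LinearEquiv.coe_toLinearMap,
          LinearEquiv.apply_symm_apply, map_zero] using this
      have hle : LinearMap.ker q2 ≤ LinearMap.ker (ek w) := by
        intro x hx
        rw [← hrangep] at hx
        obtain ⟨u, rfl⟩ := hx
        exact congrArg (fun ψ : Module.Dual A (Fin n → A) => ψ u) hz
      obtain ⟨ξ, hξ⟩ := factor_through q2 hq2 (ek w) hle
      obtain ⟨x, hx⟩ := hbij.2 ξ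
      refine ⟨x, ?_⟩
      have hdm : q2.dualMap ξ = ek w := by
        apply LinearMap.ext; intro u
        exact hξ u
      simp only [hfdef, LinearMap.comp_apply, LinearEquiv.coe_toLinearMap, hx, hdm,
        LinearEquiv.symm_apply_apply]
    · rintro ⟨x, rfl⟩
      have hz : p2.dualMap (q2.dualMap (Module.Dual.eval A M x)) = 0 := by
        apply LinearMap.ext; intro u
        simp only [LinearMap.dualMap_apply, LinearMap.zero_apply, LinearMap.comp_apply]
        rw [hqp u, map_zero]
      simp only [hfdef, hgdef, LinearMap.comp_apply, LinearEquiv.coe_toLinearMap,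
        LinearEquiv.apply_symm_apply, hz, map_zero]


/-- Over a coherent domain, a finitely presented module `M` is reflexive iff it is
finitely copresented, i.e. there is an exact sequence `0 → M → A^m → A^n`. -/
theorem stmt_2 (A : Type) [CommRing A] [IsDomain A] (hA : IsCoherentRing A)
    (M : Type) [AddCommGroup M] [Module A M] [Module.FinitePresentation A M] :
    Function.Bijective (Module.Dual.eval A M) ↔
      ∃ (m n : ℕ) (f : M →ₗ[A] (Fin m → A)) (g : (Fin m → A) →ₗ[A] (Fin n → A)),
        Function.Injective f ∧ Function.Exact f g := by
  constructor
  · intro hbij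
    exact forward_dir A hA M hbij
  · rintro ⟨m, n, f, g, hf, hex⟩
    exact backward_dir A M m n f g hf hex
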